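/- For every n with 6≤n≤8 there exists a betweenness structure of order n and co-size 2n−10 that is not isomorphic to 𝒯_{n,i} for any 1≤i≤⌈(n−5)/2⌉. -/

import Mathlib

open scoped ENNReal

namespace FMS

/-- An (ordered) triple is collinear if one of its points lies between the other two. -/
def CollinearTriple {X : Type*} (btw : X → X → X → Prop) (x y z : X) : Prop :=
  btw x y z ∨ btw y x z ∨ btw x z y

/-- A finite set of points is collinear if it can be enumerated as a collinear triple. -/
def CollinearSet {X : Type*} (btw : X → X → X → Prop) (T : Finset X) : Prop :=
  ∃ x y z : X, (T : Set X) = {x, y, z} ∧ CollinearTriple btw x y z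

/-- A triangle is a 3-element subset of the ground set that is not collinear. -/
def IsTriangle {X : Type*} (btw : X → X → X → Prop) (T : Finset X) : Prop :=
  T.card = 3 ∧ ¬ CollinearSet btw T

/-- The co-size of a betweenness structure: the number of triangles. -/
noncomputable def coSize {X : Type*} (btw : X → X → X → Prop) : ℕ :=
  Set.ncard {T : Finset X | IsTriangle btw T}

/-- The degree of a point: the number of triangles containing it. -/
noncomputable def degB {X : Type*} (btw : X → X → X → Prop) (x : X) : ℕ :=
  Set.ncard {T : Finset X | IsTriangle btw T ∧ x ∈ T}

/-- A betweenness structure is linear if every 3-element subset is collinear. -/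
def Linear {X : Type*} (btw : X → X → X → Prop) : Prop :=
  ∀ T : Finset X, T.card = 3 → CollinearSet btw T

/-- The axioms (P1)-(P4) of (almost-metrizable) betweenness structures. -/
def IsBtw {X : Type*} (btw : X → X → X → Prop) : Prop :=
  (∀ x z : X, btw x x z) ∧
  (∀ x y z : X, btw x y z → btw z y x) ∧
  (∀ x y z : X, btw x y z → btw y x z → x = y) ∧
  (∀ x y z w : X, btw x y z → btw x w y → btw x w z ∧ btw w y z)

/-- Isomorphism of betweenness structures. -/
def BIso {X Y : Type*} (btwX : X → X → X → Prop) (btwY : Y → Y → Y → Prop) : Prop :=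
  ∃ e : X ≃ Y, ∀ x y z : X, btwX x y z ↔ btwY (e x) (e y) (e z)

/-- The cost (length) of a walk, given edge weights `w` (non-edges have weight `⊤`). -/
noncomputable def walkCost {X : Type*} (w : X → X → ℝ≥0∞) : List X → ℝ≥0∞
  | [] => 0
  | [_] => 0
  | a :: b :: l => w a b + walkCost w (b :: l)

/-- Shortest-path distance for the weighted graph with weight function `w`. -/
noncomputable def spDist {X : Type*} (w : X → X → ℝ≥0∞) (x y : X) : ℝ≥0∞ :=
  ⨅ l ∈ {l : List X | l.head? = some x ∧ l.getLast? = some y}, walkCost w l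

/-- The betweenness structure induced by the weighted graph with weight function `w`:
`y` is between `x` and `z` iff `d(x,y) + d(y,z) = d(x,z)` for the shortest-path metric. -/
def metricBtw {X : Type*} (w : X → X → ℝ≥0∞) (x y z : X) : Prop :=
  spDist w x y + spDist w y z = spDist w x z

/-- The ordered betweenness structure `𝒫ₙ` induced by the path `Pₙ`. -/
def pathBtw (n : ℕ) : Fin n → Fin n → Fin n → Prop := fun i j k =>
  (i ≤ j ∧ j ≤ k) ∨ (k ≤ j ∧ j ≤ i)

/-- Unit edge weights of the 4-cycle `C₄`. -/
noncomputable def wC4 : Fin 4 → Fin 4 → ℝ≥0∞ := fun i j =>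
  if (j : ℕ) = ((i : ℕ) + 1) % 4 ∨ (i : ℕ) = ((j : ℕ) + 1) % 4 then 1 else ⊤

/-- Unit edge weights of the complete graph `K₃`. -/
noncomputable def wK3 : Fin 3 → Fin 3 → ℝ≥0∞ := fun i j => if i ≠ j then 1 else ⊤

/-- A betweenness structure is regular if no 4-element subset induces a substructure
isomorphic to `𝒞₄` (no cyclic line). -/
def Regular {X : Type*} (btw : X → X → X → Prop) : Prop :=
  ∀ Y : Set X, ¬ BIso (fun a b c : Y => btw a.1 b.1 c.1) (metricBtw wC4)

/-- A betweenness structure is orderable if it has an ordered extension: there is an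
ordering (injective labeling by naturals) of the points such that every betweenness
relation is compatible with it. -/
def Orderable {X : Type*} (btw : X → X → X → Prop) : Prop :=
  ∃ f : X → ℕ, Function.Injective f ∧
    ∀ x y z : X, btw x y z → (f x ≤ f y ∧ f y ≤ f z) ∨ (f z ≤ f y ∧ f y ≤ f x)

/-- The triangle hypergraph is a Δ-star: at most one edge, or all pairs of distinct
triangles meet in the same kernel `K`. -/
def DeltaStar {X : Type*} (btw : X → X → X → Prop) : Prop :=
  {T : Finset X | IsTriangle btw T}.Subsingleton ∨
  ∃ K : Set X, ∀ E F : Finset X, IsTriangle btw E → IsTriangle btw F → E ≠ F →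
    (E : Set X) ∩ (F : Set X) = K

/-- The triangle hypergraph is a tight star: at most one edge, or all pairs of distinct
triangles meet in the same 2-element kernel `K`. -/
def TightStar {X : Type*} (btw : X → X → X → Prop) : Prop :=
  {T : Finset X | IsTriangle btw T}.Subsingleton ∨
  ∃ K : Set X, K.ncard = 2 ∧ ∀ E F : Finset X, IsTriangle btw E → IsTriangle btw F → E ≠ F →
    (E : Set X) ∩ (F : Set X) = K

/-- A class of betweenness structures is hereditary if it is closed under isomorphism
and under taking induced substructures. -/
def Hereditary (Φ : ∀ X : Type, (X → X → X → Prop) → Prop) : Prop :=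
  (∀ (X Y : Type) (bX : X → X → X → Prop) (bY : Y → Y → Y → Prop),
      BIso bX bY → Φ X bX → Φ Y bY) ∧
  (∀ (X : Type) (bX : X → X → X → Prop) (Y : Set X), Y.Nonempty →
      Φ X bX → Φ Y (fun a b c : Y => bX a.1 b.1 c.1))

/-! Weight functions of the graphs `Q`, `R`, `S`, `T`.
In each of the following, the vertex `Sum.inl a : Fin m ⊕ Bool` is the point
`x_{a+1}` (so `x₁,…,x_m` with `m = n - 2` are `Sum.inl 0, …, Sum.inl (m-1)`),
`Sum.inr false` is `y` and `Sum.inr true` is `z`. The parameter `i` is 1-based,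
as in the paper. Non-edges have weight `⊤`. -/

/-- `Q²ₙ` with `m = n - 2`: path plus edges `{y,x₁}, {z,x₁}, {y,z}`. -/
noncomputable def wQ2 (m : ℕ) : Fin m ⊕ Bool → Fin m ⊕ Bool → ℝ≥0∞
  | Sum.inl a, Sum.inl b => if (a : ℕ) + 1 = (b : ℕ) ∨ (b : ℕ) + 1 = (a : ℕ) then 1 else ⊤
  | Sum.inl a, Sum.inr _ => if (a : ℕ) = 0 then 1 else ⊤
  | Sum.inr _, Sum.inl b => if (b : ℕ) = 0 then 1 else ⊤
  | Sum.inr c, Sum.inr d => if c ≠ d then 1 else ⊤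

/-- `Q³ₙ` with `m = n - 2`: path plus edges `{y,x₁}, {z,x₁}`. -/
noncomputable def wQ3 (m : ℕ) : Fin m ⊕ Bool → Fin m ⊕ Bool → ℝ≥0∞
  | Sum.inl a, Sum.inl b => if (a : ℕ) + 1 = (b : ℕ) ∨ (b : ℕ) + 1 = (a : ℕ) then 1 else ⊤
  | Sum.inl a, Sum.inr _ => if (a : ℕ) = 0 then 1 else ⊤
  | Sum.inr _, Sum.inl b => if (b : ℕ) = 0 then 1 else ⊤
  | Sum.inr _, Sum.inr _ => ⊤

/-- `R²ₙ,ᵢ` with `m = n - 2`: path with edge `{xᵢ, xᵢ₊₁}` deleted, plus unit edges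
`{y,xᵢ}, {z,xᵢ}, {y,xᵢ₊₁}, {z,xᵢ₊₁}, {y,z}`. -/
noncomputable def wR2 (m i : ℕ) : Fin m ⊕ Bool → Fin m ⊕ Bool → ℝ≥0∞
  | Sum.inl a, Sum.inl b =>
      if ((a : ℕ) + 1 = (b : ℕ) ∧ (a : ℕ) + 1 ≠ i) ∨
         ((b : ℕ) + 1 = (a : ℕ) ∧ (b : ℕ) + 1 ≠ i) then 1 else ⊤
  | Sum.inl a, Sum.inr _ => if (a : ℕ) + 1 = i ∨ (a : ℕ) = i then 1 else ⊤
  | Sum.inr _, Sum.inl b => if (b : ℕ) + 1 = i ∨ (b : ℕ) = i then 1 else ⊤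
  | Sum.inr c, Sum.inr d => if c ≠ d then 1 else ⊤

/-- `R³ₙ,ᵢ` with `m = n - 2`: path with edge `{xᵢ, xᵢ₊₁}` deleted, plus unit edges
`{y,xᵢ}, {z,xᵢ}` and weight-2 edges `{y,xᵢ₊₁}, {z,xᵢ₊₁}`. -/
noncomputable def wR3 (m i : ℕ) : Fin m ⊕ Bool → Fin m ⊕ Bool → ℝ≥0∞
  | Sum.inl a, Sum.inl b =>
      if ((a : ℕ) + 1 = (b : ℕ) ∧ (a : ℕ) + 1 ≠ i) ∨
         ((b : ℕ) + 1 = (a : ℕ) ∧ (b : ℕ) + 1 ≠ i) then 1 else ⊤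
  | Sum.inl a, Sum.inr _ => if (a : ℕ) + 1 = i then 1 else if (a : ℕ) = i then 2 else ⊤
  | Sum.inr _, Sum.inl b => if (b : ℕ) + 1 = i then 1 else if (b : ℕ) = i then 2 else ⊤
  | Sum.inr _, Sum.inr _ => ⊤

/-- `R⁴ₙ,ᵢ` with `m = n - 2`: path with edge `{xᵢ, xᵢ₊₁}` deleted, plus unit edges
`{y,xᵢ}, {z,xᵢ}, {y,xᵢ₊₁}, {z,xᵢ₊₁}`. -/
noncomputable def wR4 (m i : ℕ) : Fin m ⊕ Bool → Fin m ⊕ Bool → ℝ≥0∞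
  | Sum.inl a, Sum.inl b =>
      if ((a : ℕ) + 1 = (b : ℕ) ∧ (a : ℕ) + 1 ≠ i) ∨
         ((b : ℕ) + 1 = (a : ℕ) ∧ (b : ℕ) + 1 ≠ i) then 1 else ⊤
  | Sum.inl a, Sum.inr _ => if (a : ℕ) + 1 = i ∨ (a : ℕ) = i then 1 else ⊤
  | Sum.inr _, Sum.inl b => if (b : ℕ) + 1 = i ∨ (b : ℕ) = i then 1 else ⊤
  | Sum.inr _, Sum.inr _ => ⊤

/-- `S²ₙ` with `m = n - 2`: path plus unit edges `{x₁,y}, {x_m,z}` and an edge `{y,z}`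
of weight `n - 2 = m`. -/
noncomputable def wS2 (m : ℕ) : Fin m ⊕ Bool → Fin m ⊕ Bool → ℝ≥0∞
  | Sum.inl a, Sum.inl b => if (a : ℕ) + 1 = (b : ℕ) ∨ (b : ℕ) + 1 = (a : ℕ) then 1 else ⊤
  | Sum.inl a, Sum.inr c =>
      if (c = false ∧ (a : ℕ) = 0) ∨ (c = true ∧ (a : ℕ) = m - 1) then 1 else ⊤
  | Sum.inr c, Sum.inl b =>
      if (c = false ∧ (b : ℕ) = 0) ∨ (c = true ∧ (b : ℕ) = m - 1) then 1 else ⊤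
  | Sum.inr c, Sum.inr d => if c ≠ d then (m : ℝ≥0∞) else ⊤

/-- `S³ₙ` with `m = n - 2`: path plus a unit edge `{x₁,y}`, a weight-2 edge `{x_m,z}`
and an edge `{y,z}` of weight `n - 2 = m`. -/
noncomputable def wS3 (m : ℕ) : Fin m ⊕ Bool → Fin m ⊕ Bool → ℝ≥0∞
  | Sum.inl a, Sum.inl b => if (a : ℕ) + 1 = (b : ℕ) ∨ (b : ℕ) + 1 = (a : ℕ) then 1 else ⊤
  | Sum.inl a, Sum.inr c =>
      if c = false ∧ (a : ℕ) = 0 then 1 else if c = true ∧ (a : ℕ) = m - 1 then 2 else ⊤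
  | Sum.inr c, Sum.inl b =>
      if c = false ∧ (b : ℕ) = 0 then 1 else if c = true ∧ (b : ℕ) = m - 1 then 2 else ⊤
  | Sum.inr c, Sum.inr d => if c ≠ d then (m : ℝ≥0∞) else ⊤

/-- `S⁴ₙ` with `m = n - 2`: path plus unit edges `{x₁,y}, {x_m,z}` and an edge `{y,z}`
of weight `n - 3 = m - 1`. -/
noncomputable def wS4 (m : ℕ) : Fin m ⊕ Bool → Fin m ⊕ Bool → ℝ≥0∞
  | Sum.inl a, Sum.inl b => if (a : ℕ) + 1 = (b : ℕ) ∨ (b : ℕ) + 1 = (a : ℕ) then 1 else ⊤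
  | Sum.inl a, Sum.inr c =>
      if (c = false ∧ (a : ℕ) = 0) ∨ (c = true ∧ (a : ℕ) = m - 1) then 1 else ⊤
  | Sum.inr c, Sum.inl b =>
      if (c = false ∧ (b : ℕ) = 0) ∨ (c = true ∧ (b : ℕ) = m - 1) then 1 else ⊤
  | Sum.inr c, Sum.inr d => if c ≠ d then ((m - 1 : ℕ) : ℝ≥0∞) else ⊤

/-- `Tₙ,ᵢ` with `m = n - 4`; the vertices `Sum.inl a` are the points `x_{a+1}`, and
`Sum.inr 0, Sum.inr 1, Sum.inr 2, Sum.inr 3` are `y, z, u, v` respectively. All edges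
have unit weight: the path edges `{x_j, x_{j+1}}` (`1 ≤ j ≤ n-5`, `j ≠ i`) together with
`{xᵢ,y}, {xᵢ,z}, {y,u}, {y,v}, {z,u}, {z,v}, {u,xᵢ₊₁}, {v,xᵢ₊₁}`. -/
noncomputable def wT (m i : ℕ) : Fin m ⊕ Fin 4 → Fin m ⊕ Fin 4 → ℝ≥0∞
  | Sum.inl a, Sum.inl b =>
      if ((a : ℕ) + 1 = (b : ℕ) ∧ (a : ℕ) + 1 ≠ i) ∨
         ((b : ℕ) + 1 = (a : ℕ) ∧ (b : ℕ) + 1 ≠ i) then 1 else ⊤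
  | Sum.inl a, Sum.inr c =>
      if ((a : ℕ) + 1 = i ∧ (c : ℕ) ≤ 1) ∨ ((a : ℕ) = i ∧ 2 ≤ (c : ℕ)) then 1 else ⊤
  | Sum.inr c, Sum.inl b =>
      if ((b : ℕ) + 1 = i ∧ (c : ℕ) ≤ 1) ∨ ((b : ℕ) = i ∧ 2 ≤ (c : ℕ)) then 1 else ⊤
  | Sum.inr c, Sum.inr d =>
      if ((c : ℕ) ≤ 1 ∧ 2 ≤ (d : ℕ)) ∨ ((d : ℕ) ≤ 1 ∧ 2 ≤ (c : ℕ)) then 1 else ⊤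


/-! ### Auxiliary machinery -/

section Machinery

variable {X : Type*}

/-- Additive relation induced by a distance table. -/
abbrev dRel (D : X → X → ℕ) : X → X → X → Prop :=
  fun x y z => D x y + D y z = D x z

lemma spDist_le (w : X → X → ℝ≥0∞) {x y : X} {l : List X}
    (h1 : l.head? = some x) (h2 : l.getLast? = some y) :
    spDist w x y ≤ walkCost w l :=
  iInf₂_le l ⟨h1, h2⟩

lemma spDist_le_edge (w : X → X → ℝ≥0∞) (x x' y : X) :
    spDist w x y ≤ w x x' + spDist w x' y := by
  conv_rhs => rw [spDist]
  rw [ENNReal.add_iInf]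
  refine le_iInf fun l => ?_
  rw [ENNReal.add_iInf]
  refine le_iInf fun hl => ?_
  obtain ⟨h1, h2⟩ := hl
  match l, h1, h2 with
  | a :: t, h1, h2 =>
    have ha : a = x' := by simpa using h1
    subst ha
    have hh : (x :: a :: t).head? = some x := rfl
    have hg : (x :: a :: t).getLast? = some y := by
      rwa [List.getLast?_cons_cons]
    exact spDist_le w hh hg

lemma D_le_spDist (w : X → X → ℝ≥0∞) (D : X → X → ℕ)
    (hd : ∀ x, D x x = 0)
    (htri : ∀ x y z, (D x z : ℝ≥0∞) ≤ w x y + D y z) :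
    ∀ x y, (D x y : ℝ≥0∞) ≤ spDist w x y := by
  have key : ∀ (l : List X) (x y : X), l.head? = some x → l.getLast? = some y →
      (D x y : ℝ≥0∞) ≤ walkCost w l := by
    intro l
    induction l with
    | nil => intro x y h1 _; simp at h1
    | cons a t ih =>
      intro x y h1 h2
      have hax : a = x := by simpa using h1
      subst hax
      cases t with
      | nil =>
        have hay : a = y := by simpa using h2
        subst hay
        have h0 : walkCost w [a] = 0 := rfl
        rw [h0, hd a]; simp
      | cons b t' =>
        have h2' : (b :: t').getLast? = some y := by rwa [List.getLast?_cons_cons] at h2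
        calc (D a y : ℝ≥0∞) ≤ w a b + D b y := htri a b y
          _ ≤ w a b + walkCost w (b :: t') := add_le_add_right (ih b y rfl h2') _
          _ = walkCost w (a :: b :: t') := rfl
  intro x y
  exact le_iInf₂ fun l hl => key l x y hl.1 hl.2

lemma spDist_le_D (w : X → X → ℝ≥0∞) (D : X → X → ℕ)
    (h0 : ∀ x, D x x = 0)
    (hstep : ∀ x y, x ≠ y → ∃ x', w x x' = 1 ∧ D x y = D x' y + 1) :
    ∀ x y, spDist w x y ≤ (D x y : ℝ≥0∞) := by
  have key : ∀ (k : ℕ) (x y : X), D x y = k → spDist w x y ≤ (k : ℝ≥0∞) := by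
    intro k
    induction k with
    | zero =>
      intro x y hxy
      rcases eq_or_ne x y with rfl | hne
      · have h := spDist_le w (l := [x]) (x := x) (y := x) rfl rfl
        have h0' : walkCost w [x] = 0 := rfl
        rw [h0'] at h
        simpa using h
      · obtain ⟨x', -, hD⟩ := hstep x y hne; omega
    | succ k ih =>
      intro x y hxy
      have hne : x ≠ y := by rintro rfl; rw [h0] at hxy; omega
      obtain ⟨x', hw, hD⟩ := hstep x y hne
      have hk : D x' y = k := by omega
      calc spDist w x y ≤ w x x' + spDist w x' y := spDist_le_edge w x x' y
        _ ≤ 1 + (k : ℝ≥0∞) := by rw [hw]; exact add_le_add_right (ih x' y hk) 1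
        _ = ((k + 1 : ℕ) : ℝ≥0∞) := by push_cast; ring
  intro x y; exact key _ x y rfl

theorem metricBtw_eq_dRel (w : X → X → ℝ≥0∞) (adj : X → X → Bool) (D : X → X → ℕ)
    (hw : ∀ a b, w a b = if adj a b then 1 else ⊤)
    (h0 : ∀ x, D x x = 0)
    (htriB : ∀ x y z, adj x y = true → D x z ≤ D y z + 1)
    (hstepB : ∀ x y, x ≠ y → ∃ x', adj x x' = true ∧ D x y = D x' y + 1) :
    metricBtw w = dRel D := by
  have htri : ∀ x y z, (D x z : ℝ≥0∞) ≤ w x y + D y z := by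
    intro x y z
    rw [hw]
    by_cases hab : adj x y
    · rw [if_pos hab]
      calc ((D x z : ℕ) : ℝ≥0∞) ≤ ((D y z + 1 : ℕ) : ℝ≥0∞) := Nat.cast_le.2 (htriB x y z hab)
        _ = 1 + (D y z : ℝ≥0∞) := by push_cast; ring
    · rw [if_neg hab, top_add]; exact le_top
  have hstep : ∀ x y, x ≠ y → ∃ x', w x x' = 1 ∧ D x y = D x' y + 1 := by
    intro x y hne
    obtain ⟨x', ha, hD⟩ := hstepB x y hne
    exact ⟨x', by rw [hw, if_pos ha], hD⟩
  have heq : ∀ x y, spDist w x y = (D x y : ℝ≥0∞) :=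
    fun x y => le_antisymm (spDist_le_D w D h0 hstep x y) (D_le_spDist w D h0 htri x y)
  funext x y z
  apply propext
  unfold metricBtw
  rw [heq, heq, heq]
  constructor
  · intro h; exact_mod_cast h
  · intro h; exact_mod_cast h

end Machinery

section Counting

variable {X : Type*} [DecidableEq X]

instance decCollinearTriple (btw : X → X → X → Prop) [∀ x y z, Decidable (btw x y z)]
    (x y z : X) : Decidable (CollinearTriple btw x y z) :=
  decidable_of_iff (btw x y z ∨ btw y x z ∨ btw x z y) Iff.rfl

lemma collinearSet_iff (btw : X → X → X → Prop) (T : Finset X) :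
    CollinearSet btw T ↔
      ∃ x ∈ T, ∃ y ∈ T, ∃ z ∈ T, T = ({x, y, z} : Finset X) ∧ CollinearTriple btw x y z := by
  constructor
  · rintro ⟨x, y, z, hT, hc⟩
    have hT' : T = ({x, y, z} : Finset X) := by
      apply Finset.coe_injective
      rw [hT]; simp
    refine ⟨x, ?_, y, ?_, z, ?_, hT', hc⟩ <;> rw [hT'] <;> simp
  · rintro ⟨x, -, y, -, z, -, hT, hc⟩
    exact ⟨x, y, z, by rw [hT]; simp, hc⟩

instance decCollinearSet (btw : X → X → X → Prop) [∀ x y z, Decidable (btw x y z)]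
    (T : Finset X) : Decidable (CollinearSet btw T) :=
  decidable_of_iff _ (collinearSet_iff btw T).symm

instance decIsTriangle (btw : X → X → X → Prop) [∀ x y z, Decidable (btw x y z)]
    (T : Finset X) : Decidable (IsTriangle btw T) :=
  decidable_of_iff (T.card = 3 ∧ ¬ CollinearSet btw T) Iff.rfl

lemma coSize_eq_filter [Fintype X] (btw : X → X → X → Prop) [∀ x y z, Decidable (btw x y z)] :
    coSize btw = (Finset.univ.filter fun T : Finset X => IsTriangle btw T).card := by
  rw [coSize]
  have h : {T : Finset X | IsTriangle btw T}
      = ↑(Finset.univ.filter fun T : Finset X => IsTriangle btw T) := by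
    ext T; simp
  rw [h, Set.ncard_coe_finset]

lemma degB_eq_filter [Fintype X] (btw : X → X → X → Prop) [∀ x y z, Decidable (btw x y z)]
    (x : X) :
    degB btw x = (Finset.univ.filter fun T : Finset X => IsTriangle btw T ∧ x ∈ T).card := by
  rw [degB]
  have h : {T : Finset X | IsTriangle btw T ∧ x ∈ T}
      = ↑(Finset.univ.filter fun T : Finset X => IsTriangle btw T ∧ x ∈ T) := by
    ext T; simp
  rw [h, Set.ncard_coe_finset]

end Counting

section Transfer

variable {X Y : Type*} [DecidableEq X] [DecidableEq Y]

lemma collinearSet_map (bX : X → X → X → Prop) (bY : Y → Y → Y → Prop) (e : X ≃ Y)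
    (he : ∀ x y z, bX x y z ↔ bY (e x) (e y) (e z)) (T : Finset X) :
    CollinearSet bX T → CollinearSet bY (T.image e) := by
  rintro ⟨x, y, z, hT, hc⟩
  refine ⟨e x, e y, e z, ?_, ?_⟩
  · rw [Finset.coe_image, hT]; simp [Set.image_insert_eq]
  · unfold CollinearTriple at hc ⊢
    rw [← he, ← he, ← he]; exact hc

lemma isTriangle_map (bX : X → X → X → Prop) (bY : Y → Y → Y → Prop) (e : X ≃ Y)
    (he : ∀ x y z, bX x y z ↔ bY (e x) (e y) (e z)) (T : Finset X) :
    IsTriangle bX T → IsTriangle bY (T.image e) := by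
  rintro ⟨h3, hnc⟩
  refine ⟨by rw [Finset.card_image_of_injective _ e.injective, h3], fun hc => hnc ?_⟩
  have he' : ∀ x y z, bY x y z ↔ bX (e.symm x) (e.symm y) (e.symm z) := by
    intro x y z; rw [he]; simp
  have h := collinearSet_map bY bX e.symm he' (T.image e) hc
  have himg : (T.image e).image e.symm = T := by
    rw [Finset.image_image]
    simp
  rwa [himg] at h

lemma degB_eq_of_biso (bX : X → X → X → Prop) (bY : Y → Y → Y → Prop) (e : X ≃ Y)
    (he : ∀ x y z, bX x y z ↔ bY (e x) (e y) (e z)) (x : X) :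
    degB bX x = degB bY (e x) := by
  unfold degB
  rw [← Set.ncard_image_of_injective {T : Finset X | IsTriangle bX T ∧ x ∈ T}
    (Finset.image_injective e.injective)]
  congr 1
  ext S
  simp only [Set.mem_image, Set.mem_setOf_eq]
  constructor
  · rintro ⟨T, ⟨hT, hx⟩, rfl⟩
    exact ⟨isTriangle_map bX bY e he T hT, Finset.mem_image_of_mem e hx⟩
  · rintro ⟨hS, hx⟩
    have he' : ∀ x y z, bY x y z ↔ bX (e.symm x) (e.symm y) (e.symm z) := by
      intro x y z; rw [he]; simp
    refine ⟨S.image e.symm, ⟨isTriangle_map bY bX e.symm he' S hS, ?_⟩, ?_⟩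
    · exact Finset.mem_image.2 ⟨e x, hx, by simp⟩
    · rw [Finset.image_image]; simp

lemma hasDeg_of_biso {bX : X → X → X → Prop} {bY : Y → Y → Y → Prop}
    (h : BIso bX bY) (k : ℕ) : (∃ x, k ≤ degB bX x) → ∃ y, k ≤ degB bY y := by
  obtain ⟨e, he⟩ := h
  rintro ⟨x, hx⟩
  exact ⟨e x, by rw [← degB_eq_of_biso bX bY e he x]; exact hx⟩

end Transfer

section Data

/-- Table lookup for distance matrices. -/
def look (t : List (List ℕ)) (a b : ℕ) : ℕ := (t.getD a []).getD b 0

/-- Table lookup for adjacency matrices. -/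
def lookB (t : List (List Bool)) (a b : ℕ) : Bool := (t.getD a []).getD b false

/-- Index of a vertex of `Tₙ,ᵢ`. -/
def idxT {m : ℕ} : Fin m ⊕ Fin 4 → ℕ := Sum.elim Fin.val (fun c => m + c.val)

def dtabT61 : List (List ℕ) := [[0, 3, 1, 1, 2, 2], [3, 0, 2, 2, 1, 1], [1, 2, 0, 2, 1, 1], [1, 2, 2, 0, 1, 1], [2, 1, 1, 1, 0, 2], [2, 1, 1, 1, 2, 0]]
def atabT61 : List (List Bool) := [[false, false, true, true, false, false], [false, false, false, false, true, true], [true, false, false, false, true, true], [true, false, false, false, true, true], [false, true, true, true, false, false], [false, true, true, true, false, false]]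
def dtabT71 : List (List ℕ) := [[0, 3, 4, 1, 1, 2, 2], [3, 0, 1, 2, 2, 1, 1], [4, 1, 0, 3, 3, 2, 2], [1, 2, 3, 0, 2, 1, 1], [1, 2, 3, 2, 0, 1, 1], [2, 1, 2, 1, 1, 0, 2], [2, 1, 2, 1, 1, 2, 0]]
def atabT71 : List (List Bool) := [[false, false, false, true, true, false, false], [false, false, true, false, false, true, true], [false, true, false, false, false, false, false], [true, false, false, false, false, true, true], [true, false, false, false, false, true, true], [false, true, false, true, true, false, false], [false, true, false, true, true, false, false]]
def dtabT81 : List (List ℕ) := [[0, 3, 4, 5, 1, 1, 2, 2], [3, 0, 1, 2, 2, 2, 1, 1], [4, 1, 0, 1, 3, 3, 2, 2], [5, 2, 1, 0, 4, 4, 3, 3], [1, 2, 3, 4, 0, 2, 1, 1], [1, 2, 3, 4, 2, 0, 1, 1], [2, 1, 2, 3, 1, 1, 0, 2], [2, 1, 2, 3, 1, 1, 2, 0]]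
def atabT81 : List (List Bool) := [[false, false, false, false, true, true, false, false], [false, false, true, false, false, false, true, true], [false, true, false, true, false, false, false, false], [false, false, true, false, false, false, false, false], [true, false, false, false, false, false, true, true], [true, false, false, false, false, false, true, true], [false, true, false, false, true, true, false, false], [false, true, false, false, true, true, false, false]]
def dtabT82 : List (List ℕ) := [[0, 1, 4, 5, 2, 2, 3, 3], [1, 0, 3, 4, 1, 1, 2, 2], [4, 3, 0, 1, 2, 2, 1, 1], [5, 4, 1, 0, 3, 3, 2, 2], [2, 1, 2, 3, 0, 2, 1, 1], [2, 1, 2, 3, 2, 0, 1, 1], [3, 2, 1, 2, 1, 1, 0, 2], [3, 2, 1, 2, 1, 1, 2, 0]]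
def atabT82 : List (List Bool) := [[false, true, false, false, false, false, false, false], [true, false, false, false, true, true, false, false], [false, false, false, true, false, false, true, true], [false, false, true, false, false, false, false, false], [false, true, false, false, false, false, true, true], [false, true, false, false, false, false, true, true], [false, false, true, false, true, true, false, false], [false, false, true, false, true, true, false, false]]
def dtabM6 : List (List ℕ) := [[0, 1, 2, 3, 1, 4], [1, 0, 1, 2, 2, 3], [2, 1, 0, 1, 3, 2], [3, 2, 1, 0, 4, 1], [1, 2, 3, 4, 0, 3], [4, 3, 2, 1, 3, 0]]
def dtabM7 : List (List ℕ) := [[0, 1, 2, 3, 4, 1, 1], [1, 0, 1, 2, 3, 2, 2], [2, 1, 0, 1, 2, 3, 3], [3, 2, 1, 0, 1, 4, 4], [4, 3, 2, 1, 0, 5, 5], [1, 2, 3, 4, 5, 0, 2], [1, 2, 3, 4, 5, 2, 0]]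
def dtabM8 : List (List ℕ) := [[0, 1, 2, 3, 4, 5, 1, 1], [1, 0, 1, 2, 3, 4, 2, 2], [2, 1, 0, 1, 2, 3, 3, 3], [3, 2, 1, 0, 1, 2, 4, 4], [4, 3, 2, 1, 0, 1, 5, 5], [5, 4, 3, 2, 1, 0, 6, 6], [1, 2, 3, 4, 5, 6, 0, 1], [1, 2, 3, 4, 5, 6, 1, 0]]

def DT61 : Fin 2 ⊕ Fin 4 → Fin 2 ⊕ Fin 4 → ℕ := fun a b => look dtabT61 (idxT a) (idxT b)
def AT61 : Fin 2 ⊕ Fin 4 → Fin 2 ⊕ Fin 4 → Bool := fun a b => lookB atabT61 (idxT a) (idxT b)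
def DT71 : Fin 3 ⊕ Fin 4 → Fin 3 ⊕ Fin 4 → ℕ := fun a b => look dtabT71 (idxT a) (idxT b)
def AT71 : Fin 3 ⊕ Fin 4 → Fin 3 ⊕ Fin 4 → Bool := fun a b => lookB atabT71 (idxT a) (idxT b)
def DT81 : Fin 4 ⊕ Fin 4 → Fin 4 ⊕ Fin 4 → ℕ := fun a b => look dtabT81 (idxT a) (idxT b)
def AT81 : Fin 4 ⊕ Fin 4 → Fin 4 ⊕ Fin 4 → Bool := fun a b => lookB atabT81 (idxT a) (idxT b)
def DT82 : Fin 4 ⊕ Fin 4 → Fin 4 ⊕ Fin 4 → ℕ := fun a b => look dtabT82 (idxT a) (idxT b)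
def AT82 : Fin 4 ⊕ Fin 4 → Fin 4 ⊕ Fin 4 → Bool := fun a b => lookB atabT82 (idxT a) (idxT b)

def DM6 : Fin 6 → Fin 6 → ℕ := fun a b => look dtabM6 a.val b.val
def DM7 : Fin 7 → Fin 7 → ℕ := fun a b => look dtabM7 a.val b.val
def DM8 : Fin 8 → Fin 8 → ℕ := fun a b => look dtabM8 a.val b.val

lemma hw61 : ∀ a b, wT 2 1 a b = if AT61 a b then 1 else ⊤ := by
  rintro (a | a) (b | b) <;> fin_cases a <;> fin_cases b <;> rfl

lemma metric61 : metricBtw (wT 2 1) = dRel DT61 :=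
  metricBtw_eq_dRel _ AT61 DT61 hw61 (by decide) (by decide) (by decide)

lemma hw71 : ∀ a b, wT 3 1 a b = if AT71 a b then 1 else ⊤ := by
  rintro (a | a) (b | b) <;> fin_cases a <;> fin_cases b <;> rfl

lemma metric71 : metricBtw (wT 3 1) = dRel DT71 :=
  metricBtw_eq_dRel _ AT71 DT71 hw71 (by decide) (by decide) (by decide)

lemma hw81 : ∀ a b, wT 4 1 a b = if AT81 a b then 1 else ⊤ := by
  rintro (a | a) (b | b) <;> fin_cases a <;> fin_cases b <;> rfl

lemma metric81 : metricBtw (wT 4 1) = dRel DT81 :=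
  metricBtw_eq_dRel _ AT81 DT81 hw81 (by decide) (by decide) (by decide)

lemma hw82 : ∀ a b, wT 4 2 a b = if AT82 a b then 1 else ⊤ := by
  rintro (a | a) (b | b) <;> fin_cases a <;> fin_cases b <;> rfl

lemma metric82 : metricBtw (wT 4 2) = dRel DT82 :=
  metricBtw_eq_dRel _ AT82 DT82 hw82 (by decide) (by decide) (by decide)

lemma degT61_le : ∀ v : Fin 2 ⊕ Fin 4,
    (Finset.univ.filter fun T => IsTriangle (dRel DT61) T ∧ v ∈ T).card ≤ 1 := by decide

lemma degM6 : 2 ≤ (Finset.univ.filter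
    fun T => IsTriangle (dRel DM6) T ∧ (4 : Fin 6) ∈ T).card := by decide

lemma isBtwM6 : IsBtw (dRel DM6) := ⟨by decide, by decide, by decide, by decide⟩

lemma coSizeM6 : (Finset.univ.filter fun T : Finset (Fin 6) => IsTriangle (dRel DM6) T).card = 2 := by
  decide

lemma degT71_le : ∀ v : Fin 3 ⊕ Fin 4,
    (Finset.univ.filter fun T => IsTriangle (dRel DT71) T ∧ v ∈ T).card ≤ 2 := by decide

lemma degM7 : 3 ≤ (Finset.univ.filter
    fun T => IsTriangle (dRel DM7) T ∧ (5 : Fin 7) ∈ T).card := by decide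

lemma isBtwM7 : IsBtw (dRel DM7) := ⟨by decide, by decide, by decide, by decide⟩

lemma coSizeM7 : (Finset.univ.filter fun T : Finset (Fin 7) => IsTriangle (dRel DM7) T).card = 4 := by
  decide

lemma degT81_le : ∀ v : Fin 4 ⊕ Fin 4,
    (Finset.univ.filter fun T => IsTriangle (dRel DT81) T ∧ v ∈ T).card ≤ 3 := by decide

lemma degT82_le : ∀ v : Fin 4 ⊕ Fin 4,
    (Finset.univ.filter fun T => IsTriangle (dRel DT82) T ∧ v ∈ T).card ≤ 3 := by decide

lemma degM8 : 4 ≤ (Finset.univ.filter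
    fun T => IsTriangle (dRel DM8) T ∧ (6 : Fin 8) ∈ T).card := by decide

lemma isBtwM8 : IsBtw (dRel DM8) := ⟨by decide, by decide, by decide, by decide⟩

lemma coSizeM8 : (Finset.univ.filter fun T : Finset (Fin 8) => IsTriangle (dRel DM8) T).card = 6 := by
  decide

end Data

/-- for `6 ≤ n ≤ 8` there is a betweenness structure of order `n` and
co-size `2n - 10` not isomorphic to any `𝒯ₙ,ᵢ` (`1 ≤ i ≤ ⌈(n-5)/2⌉`). -/
theorem stmt12 (n : ℕ) (h6 : 6 ≤ n) (h8 : n ≤ 8) :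
    ∃ btw : Fin n → Fin n → Fin n → Prop,
      IsBtw btw ∧ coSize btw = 2 * n - 10 ∧
      ∀ i : ℕ, 1 ≤ i → i ≤ (n - 4) / 2 → ¬ BIso btw (metricBtw (wT (n - 4) i)) := by
  interval_cases n
  · -- n = 6
    refine ⟨dRel DM6, isBtwM6, by rw [coSize_eq_filter]; have := coSizeM6; omega, ?_⟩
    intro i hi1 hi2
    interval_cases i
    intro h
    have h' : BIso (dRel DM6) (dRel DT61) := by rw [← metric61]; exact h
    obtain ⟨y, hy⟩ := hasDeg_of_biso h' 2
      ⟨(4 : Fin 6), by rw [degB_eq_filter]; exact degM6⟩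
    rw [degB_eq_filter] at hy
    have := degT61_le y
    omega
  · -- n = 7
    refine ⟨dRel DM7, isBtwM7, by rw [coSize_eq_filter]; have := coSizeM7; omega, ?_⟩
    intro i hi1 hi2
    interval_cases i
    intro h
    have h' : BIso (dRel DM7) (dRel DT71) := by rw [← metric71]; exact h
    obtain ⟨y, hy⟩ := hasDeg_of_biso h' 3
      ⟨(5 : Fin 7), by rw [degB_eq_filter]; exact degM7⟩
    rw [degB_eq_filter] at hy
    have := degT71_le y
    omega
  · -- n = 8
    refine ⟨dRel DM8, isBtwM8, by rw [coSize_eq_filter]; have := coSizeM8; omega, ?_⟩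
    intro i hi1 hi2
    interval_cases i
    · intro h
      have h' : BIso (dRel DM8) (dRel DT81) := by rw [← metric81]; exact h
      obtain ⟨y, hy⟩ := hasDeg_of_biso h' 4
        ⟨(6 : Fin 8), by rw [degB_eq_filter]; exact degM8⟩
      rw [degB_eq_filter] at hy
      have := degT81_le y
      omega
    · intro h
      have h' : BIso (dRel DM8) (dRel DT82) := by rw [← metric82]; exact h
      obtain ⟨y, hy⟩ := hasDeg_of_biso h' 4
        ⟨(6 : Fin 8), by rw [degB_eq_filter]; exact degM8⟩
      rw [degB_eq_filter] at hy
      have := degT82_le y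
      omega

end FMS
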